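/- arXiv:2406.10359 — 4 statements merged into one kernel-verified Lean document; each statement's English description precedes it below -/
import Mathlib

section
/- Let d ≥ 1, let Θ be a nonempty type, let a : Equiv.Perm (Fin d) → Θ → Θ be a map (the permutation action on parameters), let J_y, J_g : Θ → ℝ, V : Θ → Fin d → ℝ, and let α > 0, β > 0 and w : Fin d → ℝ with 0 ≤ w_1 < w_2 < ⋯ < w_d. Assume the equivariance laws: for every permutation e and every θ ∈ Θ, J_y(a(e, θ)) = J_y(θ), J_g(a(e, θ)) = J_g(θ), and V(a(e, θ))(i) = V(θ)(e(i)) for all i. Define the loss J(θ) = J_y(θ) + α·∑_{i=1}^{d} w_i·V(θ)(i) + β·J_g(θ). If θ* is a global minimizer of J, i.e., J(θ*) ≤ J(θ) for all θ ∈ Θ, then the values V(θ*) are ordered decreasingly: V(θ*)(1) ≥ V(θ*)(2) ≥ ⋯ ≥ V(θ*)(d). -/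
open Finset

/-- abstract Theorem 1, Existence of SSNNO.
Let `a` be a permutation action on the parameter space `Θ` under which `J_y` and
`J_g` are invariant and the state variances `V` are permuted,
`V (a e θ) i = V θ (e i)`.  If the weights `w` are nonnegative and strictly
increasing and `α, β > 0`, then any global minimizer `θ*` of the loss
`J(θ) = J_y(θ) + α·∑ i, w i · V θ i + β·J_g(θ)` has decreasingly ordered
values `V θ*`. -/
theorem ssnno_global_min_ordered_variance_abstract
    (d : ℕ) (hd : 1 ≤ d)
    (Θ : Type*) [Nonempty Θ]
    (a : Equiv.Perm (Fin d) → Θ → Θ)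
    (Jy Jg : Θ → ℝ) (V : Θ → Fin d → ℝ)
    (α β : ℝ) (hα : 0 < α) (hβ : 0 < β)
    (w : Fin d → ℝ) (hw0 : 0 ≤ w ⟨0, hd⟩) (hw : StrictMono w)
    (hJy : ∀ (e : Equiv.Perm (Fin d)) (θ : Θ), Jy (a e θ) = Jy θ)
    (hJg : ∀ (e : Equiv.Perm (Fin d)) (θ : Θ), Jg (a e θ) = Jg θ)
    (hV : ∀ (e : Equiv.Perm (Fin d)) (θ : Θ) (i : Fin d), V (a e θ) i = V θ (e i))
    (J : Θ → ℝ)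
    (hJ : ∀ θ, J θ = Jy θ + α * (∑ i, w i * V θ i) + β * Jg θ)
    (θs : Θ) (hmin : ∀ θ, J θs ≤ J θ) :
    ∀ i j : Fin d, i ≤ j → V θs j ≤ V θs i := by
  intro i j hij
  rcases eq_or_lt_of_le hij with h | hlt
  · simp [h]
  by_contra hcon
  push_neg at hcon
  have hij' : i ≠ j := ne_of_lt hlt
  set e := Equiv.swap i j with he
  have hkey := hmin (a e θs)
  rw [hJ, hJ, hJy, hJg] at hkey
  simp only [hV] at hkey
  have hsum : (∑ k, w k * V θs k) ≤ ∑ k, w k * V θs (e k) := by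
    have := sub_nonneg.mpr hkey
    nlinarith [this]
  -- reindex the right sum
  have hre : (∑ k, w k * V θs (e k)) = ∑ k, w (e k) * V θs k := by
    rw [← Equiv.sum_comp e (fun k => w k * V θs (e k))]
    simp [he, Equiv.swap_apply_self]
  rw [hre] at hsum
  have hdiff : (∑ k, w k * V θs k) - (∑ k, w (e k) * V θs k)
      = ∑ k, (w k - w (e k)) * V θs k := by
    rw [← Finset.sum_sub_distrib]
    congr 1; ext k; ring
  have hzero : ∀ k ∈ (Finset.univ : Finset (Fin d)), k ∉ ({i, j} : Finset (Fin d)) →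
      (w k - w (e k)) * V θs k = 0 := by
    intro k _ hk
    simp only [Finset.mem_insert, Finset.mem_singleton, not_or] at hk
    rw [he, Equiv.swap_apply_of_ne_of_ne hk.1 hk.2]
    ring
  have hsum2 : (∑ k, (w k - w (e k)) * V θs k)
      = ∑ k ∈ ({i, j} : Finset (Fin d)), (w k - w (e k)) * V θs k := by
    exact (Finset.sum_subset (Finset.subset_univ _) hzero).symm
  have hpair : (∑ k ∈ ({i, j} : Finset (Fin d)), (w k - w (e k)) * V θs k)
      = (w i - w j) * V θs i + (w j - w i) * V θs j := by
    rw [Finset.sum_pair hij']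
    simp [he]
  have hwij : w i < w j := hw hlt
  have hpos : 0 < (w i - w j) * V θs i + (w j - w i) * V θs j := by
    nlinarith [hcon, hwij]
  have : (∑ k, w (e k) * V θs k) < ∑ k, w k * V θs k := by
    have := hdiff ▸ hsum2 ▸ hpair ▸ hpos
    linarith [hdiff, hsum2, hpair, hpos]
  linarith
end

section
/- Fix training data u_0, …, u_{N−1} ∈ ℝ^m and y_0, …, y_{N−1} ∈ ℝ^p with N ≥ 2, constants α > 0, β > 0 and weights 0 ≤ w_1 < w_2 < ⋯ < w_d. Fix a network architecture: a state network f_NN with L ≥ 2 layers, dimensions l_0 = d + m, l_1, …, l_{L−1}, l_L = d, node activations φ_{i,j}, where the final layer uses one common activation for all d output nodes (φ_{L,j} = φ_L for all j), and an output network g_NN with H layers, dimensions h_0 = d, h_1, …, h_H = p, node activations ψ_{i,j}. A parameter θ consists of all state-network weight matrices and biases, all output-network weight matrices and biases, and an initial state x₀ ∈ ℝ^d. For each θ define the trajectory x_0(θ) = x₀, x_{k+1}(θ) = f_NN(x_k(θ), u_k) for 0 ≤ k ≤ N−2, the predictions ŷ_k(θ) = g_NN(x_k(θ)), the coordinate sample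 variances V_i(θ) of x_0(θ), …, x_{N−1}(θ), and the loss J(θ) = ∑_{k=0}^{N−1} ‖y_k − ŷ_k(θ)‖² + α·∑_{i=1}^{d} w_i·∑_{k=0}^{N−1} (x_k(θ)(i) − x̄(θ)(i))² + β·(sum of squares of all output-network weights and biases). Then every global minimizer θ* of J over all parameters of this architecture has decreasingly ordered state sample variances: V_1(θ*) ≥ V_2(θ*) ≥ ⋯ ≥ V_d(θ*). -/
open Finset

/-- One layer of a layered neural network: `v ↦ (j ↦ φ j ((A v + b) j))`. -/
noncomputable def layerMap {a c : ℕ} (A : Matrix (Fin c) (Fin a) ℝ) (bv : Fin c → ℝ)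
    (φ : Fin c → ℝ → ℝ) (v : Fin a → ℝ) : Fin c → ℝ :=
  fun j => φ j ((A.mulVec v + bv) j)

/-- Forward map of `L` consecutive layers with dimensions `l 0 → l 1 → ⋯ → l L`,
weight matrices `A i`, biases `b i` and node activations `φ i`. -/
noncomputable def netFwd (l : ℕ → ℕ) (A : ∀ i, Matrix (Fin (l (i + 1))) (Fin (l i)) ℝ)
    (b : ∀ i, Fin (l (i + 1)) → ℝ) (φ : ∀ i, Fin (l (i + 1)) → ℝ → ℝ) :
    (L : ℕ) → (Fin (l 0) → ℝ) → Fin (l L) → ℝ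
  | 0, v => v
  | (L + 1), v => layerMap (A L) (b L) (φ L) (netFwd l A b φ L v)

/-- The trainable parameters of the SSNNO architecture: all weight matrices and
biases of the state network (first layer `ℝ^{d+m} → ℝ^{lh 0}`, `Mid` middle layers
along the dimensions `lh`, last layer `ℝ^{lh Mid} → ℝ^d`, so `L = Mid + 2 ≥ 2`
layers in total), all weight matrices and biases of the output network
(first layer `ℝ^d → ℝ^{gh 0}`, then `Hg` further layers along `gh`, ending in
dimension `p = gh Hg`, so `H = Hg + 1 ≥ 1` layers), and the initial state `x₀`. -/
structure SSNNOParams (d m Mid : ℕ) (lh : ℕ → ℕ) (Hg : ℕ) (gh : ℕ → ℕ) where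
  A1 : Matrix (Fin (lh 0)) (Fin (d + m)) ℝ
  b1 : Fin (lh 0) → ℝ
  A : ∀ i : ℕ, Matrix (Fin (lh (i + 1))) (Fin (lh i)) ℝ
  b : ∀ i : ℕ, Fin (lh (i + 1)) → ℝ
  AL : Matrix (Fin d) (Fin (lh Mid)) ℝ
  bL : Fin d → ℝ
  Ag1 : Matrix (Fin (gh 0)) (Fin d) ℝ
  bg1 : Fin (gh 0) → ℝ
  Ag : ∀ i : ℕ, Matrix (Fin (gh (i + 1))) (Fin (gh i)) ℝ
  bg : ∀ i : ℕ, Fin (gh (i + 1)) → ℝ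
  x0 : Fin d → ℝ

/-- The state network `f_NN` of the SSNNO: first layer with activations `φ1`,
middle layers with activations `φ`, and a last layer using one common activation
`φL` for all `d` output nodes. -/
noncomputable def fNNp {d m Mid : ℕ} {lh : ℕ → ℕ} {Hg : ℕ} {gh : ℕ → ℕ}
    (φ1 : Fin (lh 0) → ℝ → ℝ) (φ : ∀ i, Fin (lh (i + 1)) → ℝ → ℝ) (φL : ℝ → ℝ)
    (θ : SSNNOParams d m Mid lh Hg gh) (x : Fin d → ℝ) (u : Fin m → ℝ) :
    Fin d → ℝ :=
  fun j => φL ((θ.AL.mulVec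
    (netFwd lh θ.A θ.b φ Mid (layerMap θ.A1 θ.b1 φ1 (Fin.append x u))) + θ.bL) j)

/-- The output network `g_NN` of the SSNNO, with `Hg + 1` layers and output
dimension `p = gh Hg`. -/
noncomputable def gNNp {d m Mid : ℕ} {lh : ℕ → ℕ} {Hg : ℕ} {gh : ℕ → ℕ}
    (ψ1 : Fin (gh 0) → ℝ → ℝ) (ψ : ∀ i, Fin (gh (i + 1)) → ℝ → ℝ)
    (θ : SSNNOParams d m Mid lh Hg gh) (x : Fin d → ℝ) : Fin (gh Hg) → ℝ :=
  netFwd gh θ.Ag θ.bg ψ Hg (layerMap θ.Ag1 θ.bg1 ψ1 x)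

/-- The state trajectory of the SSNNO: `x_0(θ) = θ.x0`,
`x_{k+1}(θ) = f_NN(x_k(θ), u_k)`. -/
noncomputable def xtrajP {d m Mid : ℕ} {lh : ℕ → ℕ} {Hg : ℕ} {gh : ℕ → ℕ}
    (φ1 : Fin (lh 0) → ℝ → ℝ) (φ : ∀ i, Fin (lh (i + 1)) → ℝ → ℝ) (φL : ℝ → ℝ)
    (u : ℕ → Fin m → ℝ) (θ : SSNNOParams d m Mid lh Hg gh) : ℕ → Fin d → ℝ
  | 0 => θ.x0
  | (k + 1) => fNNp φ1 φ φL θ (xtrajP φ1 φ φL u θ k) (u k)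

/-- The sample mean of the first `N` states of the SSNNO trajectory. -/
noncomputable def xbarP {d m Mid : ℕ} {lh : ℕ → ℕ} {Hg : ℕ} {gh : ℕ → ℕ}
    (φ1 : Fin (lh 0) → ℝ → ℝ) (φ : ∀ i, Fin (lh (i + 1)) → ℝ → ℝ) (φL : ℝ → ℝ)
    (N : ℕ) (u : ℕ → Fin m → ℝ) (θ : SSNNOParams d m Mid lh Hg gh) :
    Fin d → ℝ :=
  (N : ℝ)⁻¹ • ∑ k ∈ Finset.range N, xtrajP φ1 φ φL u θ k

/-- The sample variance of coordinate `i` of the first `N` states of the SSNNO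
trajectory. -/
noncomputable def varP {d m Mid : ℕ} {lh : ℕ → ℕ} {Hg : ℕ} {gh : ℕ → ℕ}
    (φ1 : Fin (lh 0) → ℝ → ℝ) (φ : ∀ i, Fin (lh (i + 1)) → ℝ → ℝ) (φL : ℝ → ℝ)
    (N : ℕ) (u : ℕ → Fin m → ℝ) (θ : SSNNOParams d m Mid lh Hg gh)
    (i : Fin d) : ℝ :=
  ((N : ℝ) - 1)⁻¹ *
    ∑ k ∈ Finset.range N, (xtrajP φ1 φ φL u θ k i - xbarP φ1 φ φL N u θ i) ^ 2

/-- The SSNNO training loss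
`J(θ) = ∑_k ‖y_k − ŷ_k(θ)‖² + α·∑_i w_i·∑_k (x_k(θ)_i − x̄(θ)_i)²`
`      + β·(sum of squares of all output-network weights and biases)`. -/
noncomputable def lossP {d m Mid : ℕ} {lh : ℕ → ℕ} {Hg : ℕ} {gh : ℕ → ℕ}
    (φ1 : Fin (lh 0) → ℝ → ℝ) (φ : ∀ i, Fin (lh (i + 1)) → ℝ → ℝ) (φL : ℝ → ℝ)
    (ψ1 : Fin (gh 0) → ℝ → ℝ) (ψ : ∀ i, Fin (gh (i + 1)) → ℝ → ℝ)
    (N : ℕ) (u : ℕ → Fin m → ℝ) (y : ℕ → Fin (gh Hg) → ℝ)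
    (α β : ℝ) (w : Fin d → ℝ)
    (θ : SSNNOParams d m Mid lh Hg gh) : ℝ :=
  (∑ k ∈ Finset.range N, ∑ j, (y k j - gNNp ψ1 ψ θ (xtrajP φ1 φ φL u θ k) j) ^ 2)
  + α * ∑ i, w i *
      (∑ k ∈ Finset.range N, (xtrajP φ1 φ φL u θ k i - xbarP φ1 φ φL N u θ i) ^ 2)
  + β * ((∑ j, ∑ i, (θ.Ag1 j i) ^ 2) + (∑ j, (θ.bg1 j) ^ 2)
      + ∑ t ∈ Finset.range Hg, ((∑ j, ∑ i, (θ.Ag t j i) ^ 2) + ∑ j, (θ.bg t j) ^ 2))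

/-- Permute the state coordinates of an SSNNO parameter by `σ`. -/
noncomputable def permTheta {d m Mid : ℕ} {lh : ℕ → ℕ} {Hg : ℕ} {gh : ℕ → ℕ}
    (σ : Equiv.Perm (Fin d)) (θ : SSNNOParams d m Mid lh Hg gh) :
    SSNNOParams d m Mid lh Hg gh where
  A1 := Matrix.of fun r c => θ.A1 r (finSumFinEquiv (Sum.map σ id (finSumFinEquiv.symm c)))
  b1 := θ.b1
  A := θ.A
  b := θ.b
  AL := Matrix.of fun j c => θ.AL (σ j) c
  bL := fun j => θ.bL (σ j)
  Ag1 := Matrix.of fun r c => θ.Ag1 r (σ c)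
  bg1 := θ.bg1
  Ag := θ.Ag
  bg := θ.bg
  x0 := fun i => θ.x0 (σ i)

lemma mulVec_perm_append {d m c : ℕ} (σ : Equiv.Perm (Fin d))
    (A1 : Matrix (Fin c) (Fin (d + m)) ℝ) (x : Fin d → ℝ) (u : Fin m → ℝ) :
    (Matrix.of fun r c => A1 r
        (finSumFinEquiv (Sum.map σ id (finSumFinEquiv.symm c)))).mulVec
      (Fin.append (fun i => x (σ i)) u) = A1.mulVec (Fin.append x u) := by
  funext r
  simp only [Matrix.mulVec, dotProduct, Matrix.of_apply]
  rw [Fin.sum_univ_add, Fin.sum_univ_add]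
  congr 1
  · rw [← Equiv.sum_comp σ (fun t => A1 r (Fin.castAdd m t) * Fin.append x u (Fin.castAdd m t))]
    refine Finset.sum_congr rfl fun t _ => ?_
    simp [Fin.append_left]
  · refine Finset.sum_congr rfl fun s _ => ?_
    simp [Fin.append_right]

lemma xtraj_perm {d m Mid : ℕ} {lh : ℕ → ℕ} {Hg : ℕ} {gh : ℕ → ℕ}
    (φ1 : Fin (lh 0) → ℝ → ℝ) (φ : ∀ i, Fin (lh (i + 1)) → ℝ → ℝ) (φL : ℝ → ℝ)
    (u : ℕ → Fin m → ℝ) (σ : Equiv.Perm (Fin d)) (θ : SSNNOParams d m Mid lh Hg gh)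
    (k : ℕ) :
    xtrajP φ1 φ φL u (permTheta σ θ) k = fun i => xtrajP φ1 φ φL u θ k (σ i) := by
  induction k with
  | zero => rfl
  | succ k ih =>
      funext i
      show fNNp φ1 φ φL (permTheta σ θ) (xtrajP φ1 φ φL u (permTheta σ θ) k) (u k) i = _
      rw [ih]
      have hl : layerMap (permTheta σ θ).A1 (permTheta σ θ).b1 φ1
          (Fin.append (fun i => xtrajP φ1 φ φL u θ k (σ i)) (u k))
          = layerMap θ.A1 θ.b1 φ1 (Fin.append (xtrajP φ1 φ φL u θ k) (u k)) := by
        funext jj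
        simp only [layerMap, permTheta]
        rw [mulVec_perm_append σ θ.A1 (xtrajP φ1 φ φL u θ k) (u k)]
      simp only [fNNp]
      rw [hl]
      simp only [permTheta, xtrajP, fNNp, Pi.add_apply, Matrix.mulVec, dotProduct,
        Matrix.of_apply]

lemma gNN_perm {d m Mid : ℕ} {lh : ℕ → ℕ} {Hg : ℕ} {gh : ℕ → ℕ}
    (ψ1 : Fin (gh 0) → ℝ → ℝ) (ψ : ∀ i, Fin (gh (i + 1)) → ℝ → ℝ)
    (σ : Equiv.Perm (Fin d)) (θ : SSNNOParams d m Mid lh Hg gh) (x : Fin d → ℝ) :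
    gNNp ψ1 ψ (permTheta σ θ) (fun i => x (σ i)) = gNNp ψ1 ψ θ x := by
  have hl : layerMap (permTheta σ θ).Ag1 (permTheta σ θ).bg1 ψ1 (fun i => x (σ i))
      = layerMap θ.Ag1 θ.bg1 ψ1 x := by
    funext j
    simp only [layerMap, permTheta, Pi.add_apply, Matrix.mulVec, dotProduct,
      Matrix.of_apply]
    rw [← Equiv.sum_comp σ (fun c => θ.Ag1 j c * x c)]
  show netFwd gh (permTheta σ θ).Ag (permTheta σ θ).bg ψ Hg _ = _
  rw [hl]
  rfl

lemma xbar_perm {d m Mid : ℕ} {lh : ℕ → ℕ} {Hg : ℕ} {gh : ℕ → ℕ}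
    (φ1 : Fin (lh 0) → ℝ → ℝ) (φ : ∀ i, Fin (lh (i + 1)) → ℝ → ℝ) (φL : ℝ → ℝ)
    (N : ℕ) (u : ℕ → Fin m → ℝ) (σ : Equiv.Perm (Fin d))
    (θ : SSNNOParams d m Mid lh Hg gh) :
    xbarP φ1 φ φL N u (permTheta σ θ) = fun i => xbarP φ1 φ φL N u θ (σ i) := by
  funext i
  simp only [xbarP, Pi.smul_apply, Finset.sum_apply, smul_eq_mul]
  congr 1
  exact Finset.sum_congr rfl fun k _ => by rw [xtraj_perm]

/-- Theorem 1, Existence of SSNNO, concrete form.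
For fixed training data `u, y` (`N ≥ 2`), hyperparameters `α, β > 0`, nonnegative
strictly increasing variance weights `w`, and a fixed architecture whose state
network uses one common activation `φL` in its final layer, every global minimizer
`θ*` of the variance-regularized training loss `J` has decreasingly ordered state
sample variances: `V_1(θ*) ≥ V_2(θ*) ≥ ⋯ ≥ V_d(θ*)`. -/
theorem ssnno_global_min_ordered_variance
    (d m Mid : ℕ) (hd : 1 ≤ d) (lh : ℕ → ℕ) (Hg : ℕ) (gh : ℕ → ℕ)
    (φ1 : Fin (lh 0) → ℝ → ℝ) (φ : ∀ i, Fin (lh (i + 1)) → ℝ → ℝ) (φL : ℝ → ℝ)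
    (ψ1 : Fin (gh 0) → ℝ → ℝ) (ψ : ∀ i, Fin (gh (i + 1)) → ℝ → ℝ)
    (N : ℕ) (hN : 2 ≤ N)
    (u : ℕ → Fin m → ℝ) (y : ℕ → Fin (gh Hg) → ℝ)
    (α β : ℝ) (hα : 0 < α) (hβ : 0 < β)
    (w : Fin d → ℝ) (hw0 : 0 ≤ w ⟨0, hd⟩) (hw : StrictMono w)
    (θs : SSNNOParams d m Mid lh Hg gh)
    (hmin : ∀ θ : SSNNOParams d m Mid lh Hg gh,
      lossP φ1 φ φL ψ1 ψ N u y α β w θs ≤ lossP φ1 φ φL ψ1 ψ N u y α β w θ) :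
    ∀ i j : Fin d, i ≤ j → varP φ1 φ φL N u θs j ≤ varP φ1 φ φL N u θs i := by
  intro i j hij
  rcases eq_or_lt_of_le hij with h | h
  · rw [h]
  -- notation
  set S : Fin d → ℝ := fun ii =>
    ∑ k ∈ Finset.range N, (xtrajP φ1 φ φL u θs k ii - xbarP φ1 φ φL N u θs ii) ^ 2 with hSdef
  have hne : i ≠ j := ne_of_lt h
  set σ : Equiv.Perm (Fin d) := Equiv.swap i j with hσ
  have hσij : σ i = j := Equiv.swap_apply_left i j
  have hσji : σ j = i := Equiv.swap_apply_right i j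
  -- the loss at the permuted parameter
  have hB : lossP φ1 φ φL ψ1 ψ N u y α β w (permTheta σ θs)
      = (∑ k ∈ Finset.range N, ∑ jj,
          (y k jj - gNNp ψ1 ψ θs (xtrajP φ1 φ φL u θs k) jj) ^ 2)
        + α * ∑ ii, w ii * S (σ ii)
        + β * ((∑ jj, ∑ ii, (θs.Ag1 jj ii) ^ 2) + (∑ jj, (θs.bg1 jj) ^ 2)
            + ∑ t ∈ Finset.range Hg,
                ((∑ jj, ∑ ii, (θs.Ag t jj ii) ^ 2) + ∑ jj, (θs.bg t jj) ^ 2)) := by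
    simp only [lossP]
    congr 1
    · congr 1
      · -- fit term
        refine Finset.sum_congr rfl fun k _ => ?_
        rw [xtraj_perm φ1 φ φL u σ θs k, gNN_perm]
      · -- variance term
        congr 1
        refine Finset.sum_congr rfl fun ii _ => ?_
        congr 1
        simp only [hSdef]
        refine Finset.sum_congr rfl fun k _ => ?_
        rw [xtraj_perm φ1 φ φL u σ θs k, xbar_perm φ1 φ φL N u σ θs]
    · -- penalty term
      have hAg1 : ∑ jj, ∑ ii, ((permTheta σ θs).Ag1 jj ii) ^ 2
          = ∑ jj, ∑ ii, (θs.Ag1 jj ii) ^ 2 := by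
        refine Finset.sum_congr rfl fun jj _ => ?_
        simp only [permTheta, Matrix.of_apply]
        exact Equiv.sum_comp σ fun c => (θs.Ag1 jj c) ^ 2
      rw [hAg1]
      rfl
  have hA : lossP φ1 φ φL ψ1 ψ N u y α β w θs
      = (∑ k ∈ Finset.range N, ∑ jj,
          (y k jj - gNNp ψ1 ψ θs (xtrajP φ1 φ φL u θs k) jj) ^ 2)
        + α * ∑ ii, w ii * S ii
        + β * ((∑ jj, ∑ ii, (θs.Ag1 jj ii) ^ 2) + (∑ jj, (θs.bg1 jj) ^ 2)
            + ∑ t ∈ Finset.range Hg,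
                ((∑ jj, ∑ ii, (θs.Ag t jj ii) ^ 2) + ∑ jj, (θs.bg t jj) ^ 2)) := rfl
  have hmin' := hmin (permTheta σ θs)
  rw [hA, hB] at hmin'
  have hsum : ∑ ii, w ii * S ii ≤ ∑ ii, w ii * S (σ ii) :=
    le_of_mul_le_mul_left (by linarith) hα
  -- reindex the permuted sum
  have hre : ∑ ii, w ii * S (σ ii) = ∑ ii, w (σ ii) * S ii := by
    rw [← Equiv.sum_comp σ (fun t => w (σ t) * S t)]
    refine Finset.sum_congr rfl fun t _ => ?_
    simp only [hσ, Equiv.swap_apply_self]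
  rw [hre] at hsum
  have hdiff : 0 ≤ ∑ ii, (w (σ ii) - w ii) * S ii := by
    have : ∑ ii, (w (σ ii) - w ii) * S ii
        = ∑ ii, w (σ ii) * S ii - ∑ ii, w ii * S ii := by
      rw [← Finset.sum_sub_distrib]
      refine Finset.sum_congr rfl fun t _ => by ring
    linarith [this]
  have hsupp : ∑ ii, (w (σ ii) - w ii) * S ii
      = (w j - w i) * S i + (w i - w j) * S j := by
    have h0 : ∀ t ∈ (Finset.univ : Finset (Fin d)),
        t ∉ ({i, j} : Finset (Fin d)) → (w (σ t) - w t) * S t = 0 := by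
      intro t _ ht
      have h1 : t ≠ i := fun hc => ht (by simp [hc])
      have h2 : t ≠ j := fun hc => ht (by simp [hc])
      rw [hσ, Equiv.swap_apply_of_ne_of_ne h1 h2]
      ring
    rw [← Finset.sum_subset (Finset.subset_univ ({i, j} : Finset (Fin d))) h0,
      Finset.sum_pair hne, hσij, hσji]
  have hwij : w i < w j := hw h
  have hS : S j ≤ S i := by nlinarith [hdiff, hsupp]
  -- conclude for the variances
  have hc : (0 : ℝ) ≤ ((N : ℝ) - 1)⁻¹ := by
    have : (2 : ℝ) ≤ (N : ℝ) := by exact_mod_cast hN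
    have : (0 : ℝ) ≤ (N : ℝ) - 1 := by linarith
    positivity
  simp only [varP]
  exact mul_le_mul_of_nonneg_left hS hc
end

section
/- With the same training data, architecture and loss J as in the concrete Theorem 1 setting (state network with a common activation in its final layer, output network, parameter θ consisting of all weights, biases and the initial state, trajectory x_k(θ), predictions ŷ_k(θ), state sample variances V_i(θ)): for every parameter θ there exists a parameter θ̃ of the same architecture such that (i) J(θ̃) ≤ J(θ), (ii) the state sample variances of θ̃ are decreasingly ordered, V_1(θ̃) ≥ V_2(θ̃) ≥ ⋯ ≥ V_d(θ̃), and (iii) the predicted outputs are unchanged, ŷ_k(θ̃) = ŷ_k(θ) for all 0 ≤ k ≤ N−1. -/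
open Finset

/-- The permutation of `Fin (d + m)` acting by `σ` on the first block. -/
noncomputable def blockPerm {d m : ℕ} (σ : Equiv.Perm (Fin d)) :
    Equiv.Perm (Fin (d + m)) :=
  finSumFinEquiv.symm.trans ((σ.sumCongr (Equiv.refl (Fin m))).trans finSumFinEquiv)

lemma append_blockPerm {d m : ℕ} (σ : Equiv.Perm (Fin d)) (x : Fin d → ℝ)
    (u : Fin m → ℝ) (i : Fin (d + m)) :
    Fin.append (fun a => x (σ a)) u ((blockPerm σ).symm i) = Fin.append x u i := by
  rcases ha : finSumFinEquiv.symm i with a | a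
  · have hi : i = finSumFinEquiv (Sum.inl a) := by
      rw [← ha, Equiv.apply_symm_apply]
    have hsym : (blockPerm σ).symm i = finSumFinEquiv (Sum.inl (σ.symm a)) := by
      simp [blockPerm, hi]
    rw [hsym, hi]
    simp [finSumFinEquiv_apply_left, Fin.append_left]
  · have hi : i = finSumFinEquiv (Sum.inr a) := by
      rw [← ha, Equiv.apply_symm_apply]
    have hsym : (blockPerm σ).symm i = finSumFinEquiv (Sum.inr a) := by
      simp [blockPerm, hi]
    rw [hsym, hi]
    simp [finSumFinEquiv_apply_right, Fin.append_right]

/-- The parameters obtained from `θ` by permuting the state coordinates by `σ`. -/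
noncomputable def permParams {d m Mid : ℕ} {lh : ℕ → ℕ} {Hg : ℕ} {gh : ℕ → ℕ}
    (σ : Equiv.Perm (Fin d)) (θ : SSNNOParams d m Mid lh Hg gh) :
    SSNNOParams d m Mid lh Hg gh where
  A1 := fun j i => θ.A1 j (blockPerm σ i)
  b1 := θ.b1
  A := θ.A
  b := θ.b
  AL := fun j i => θ.AL (σ j) i
  bL := fun j => θ.bL (σ j)
  Ag1 := fun j i => θ.Ag1 j (σ i)
  bg1 := θ.bg1
  Ag := θ.Ag
  bg := θ.bg
  x0 := fun i => θ.x0 (σ i)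

lemma fNNp_permParams {d m Mid : ℕ} {lh : ℕ → ℕ} {Hg : ℕ} {gh : ℕ → ℕ}
    (φ1 : Fin (lh 0) → ℝ → ℝ) (φ : ∀ i, Fin (lh (i + 1)) → ℝ → ℝ) (φL : ℝ → ℝ)
    (σ : Equiv.Perm (Fin d)) (θ : SSNNOParams d m Mid lh Hg gh)
    (x : Fin d → ℝ) (u : Fin m → ℝ) :
    fNNp φ1 φ φL (permParams σ θ) (fun i => x (σ i)) u =
      fun j => fNNp φ1 φ φL θ x u (σ j) := by
  have hmv : (permParams σ θ).A1.mulVec (Fin.append (fun i => x (σ i)) u) =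
      θ.A1.mulVec (Fin.append x u) := by
    funext j
    simp only [Matrix.mulVec, dotProduct, permParams]
    rw [← Equiv.sum_comp (blockPerm σ) (fun i => θ.A1 j i * Fin.append x u i)]
    refine Finset.sum_congr rfl fun i _ => ?_
    have h := append_blockPerm σ x u ((blockPerm σ) i)
    rw [Equiv.symm_apply_apply] at h
    rw [h]
  have hlayer : layerMap (permParams σ θ).A1 (permParams σ θ).b1 φ1
      (Fin.append (fun i => x (σ i)) u) =
      layerMap θ.A1 θ.b1 φ1 (Fin.append x u) := by
    funext j
    simp only [layerMap, hmv]
    rfl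
  funext j
  simp only [fNNp, hlayer]
  rfl

lemma gNNp_permParams {d m Mid : ℕ} {lh : ℕ → ℕ} {Hg : ℕ} {gh : ℕ → ℕ}
    (ψ1 : Fin (gh 0) → ℝ → ℝ) (ψ : ∀ i, Fin (gh (i + 1)) → ℝ → ℝ)
    (σ : Equiv.Perm (Fin d)) (θ : SSNNOParams d m Mid lh Hg gh)
    (x : Fin d → ℝ) :
    gNNp ψ1 ψ (permParams σ θ) (fun i => x (σ i)) = gNNp ψ1 ψ θ x := by
  have hmv : (permParams σ θ).Ag1.mulVec (fun i => x (σ i)) = θ.Ag1.mulVec x := by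
    funext j
    simp only [Matrix.mulVec, dotProduct, permParams]
    exact Equiv.sum_comp σ (fun i => θ.Ag1 j i * x i)
  have hlayer : layerMap (permParams σ θ).Ag1 (permParams σ θ).bg1 ψ1
      (fun i => x (σ i)) = layerMap θ.Ag1 θ.bg1 ψ1 x := by
    funext j
    simp only [layerMap, hmv]
    rfl
  simp only [gNNp, hlayer]
  rfl

lemma xtrajP_permParams {d m Mid : ℕ} {lh : ℕ → ℕ} {Hg : ℕ} {gh : ℕ → ℕ}
    (φ1 : Fin (lh 0) → ℝ → ℝ) (φ : ∀ i, Fin (lh (i + 1)) → ℝ → ℝ) (φL : ℝ → ℝ)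
    (u : ℕ → Fin m → ℝ) (σ : Equiv.Perm (Fin d))
    (θ : SSNNOParams d m Mid lh Hg gh) (k : ℕ) :
    xtrajP φ1 φ φL u (permParams σ θ) k =
      fun i => xtrajP φ1 φ φL u θ k (σ i) := by
  induction k with
  | zero => rfl
  | succ k ih =>
    show fNNp φ1 φ φL (permParams σ θ) (xtrajP φ1 φ φL u (permParams σ θ) k) (u k) = _
    rw [ih, fNNp_permParams]
    rfl

/-- descent guarantee, Eq. (41), behind Algorithm 1.
In the concrete Theorem 1 setting, for every parameter `θ` there exists a
parameter `θ̃` of the same architecture such that (i) the loss does not increase,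
`J(θ̃) ≤ J(θ)`, (ii) the state sample variances of `θ̃` are decreasingly ordered,
and (iii) the predicted outputs are unchanged: `ŷ_k(θ̃) = ŷ_k(θ)` for all
`0 ≤ k ≤ N − 1`. -/
theorem ssnno_variance_sorting_descent
    (d m Mid : ℕ) (hd : 1 ≤ d) (lh : ℕ → ℕ) (Hg : ℕ) (gh : ℕ → ℕ)
    (φ1 : Fin (lh 0) → ℝ → ℝ) (φ : ∀ i, Fin (lh (i + 1)) → ℝ → ℝ) (φL : ℝ → ℝ)
    (ψ1 : Fin (gh 0) → ℝ → ℝ) (ψ : ∀ i, Fin (gh (i + 1)) → ℝ → ℝ)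
    (N : ℕ) (hN : 2 ≤ N)
    (u : ℕ → Fin m → ℝ) (y : ℕ → Fin (gh Hg) → ℝ)
    (α β : ℝ) (hα : 0 < α) (hβ : 0 < β)
    (w : Fin d → ℝ) (hw0 : 0 ≤ w ⟨0, hd⟩) (hw : StrictMono w) :
    ∀ θ : SSNNOParams d m Mid lh Hg gh,
      ∃ θt : SSNNOParams d m Mid lh Hg gh,
        lossP φ1 φ φL ψ1 ψ N u y α β w θt ≤ lossP φ1 φ φL ψ1 ψ N u y α β w θ ∧
        (∀ i j : Fin d, i ≤ j → varP φ1 φ φL N u θt j ≤ varP φ1 φ φL N u θt i) ∧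
        (∀ k < N, gNNp ψ1 ψ θt (xtrajP φ1 φ φL u θt k) =
          gNNp ψ1 ψ θ (xtrajP φ1 φ φL u θ k)) := by
  intro θ
  set S : Fin d → ℝ := fun i =>
    ∑ k ∈ Finset.range N, (xtrajP φ1 φ φL u θ k i - xbarP φ1 φ φL N u θ i) ^ 2
    with hSdef
  set σ : Equiv.Perm (Fin d) := Tuple.sort (fun i => -S i) with hσdef
  have hanti : ∀ i j : Fin d, i ≤ j → S (σ j) ≤ S (σ i) := by
    intro i j hij
    have := Tuple.monotone_sort (fun i => -S i) hij
    simpa using this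
  refine ⟨permParams σ θ, ?_, ?_, ?_⟩
  -- auxiliary facts
  · -- loss does not increase
    have hxbar : ∀ i, xbarP φ1 φ φL N u (permParams σ θ) i =
        xbarP φ1 φ φL N u θ (σ i) := by
      intro i
      simp only [xbarP, Pi.smul_apply, Finset.sum_apply, smul_eq_mul]
      congr 1
      refine Finset.sum_congr rfl fun k _ => ?_
      rw [xtrajP_permParams]
    have hS : ∀ i, (∑ k ∈ Finset.range N,
        (xtrajP φ1 φ φL u (permParams σ θ) k i -
          xbarP φ1 φ φL N u (permParams σ θ) i) ^ 2) = S (σ i) := by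
      intro i
      rw [hSdef]
      refine Finset.sum_congr rfl fun k _ => ?_
      rw [xtrajP_permParams, hxbar]
    have hy : ∀ k, gNNp ψ1 ψ (permParams σ θ) (xtrajP φ1 φ φL u (permParams σ θ) k)
        = gNNp ψ1 ψ θ (xtrajP φ1 φ φL u θ k) := by
      intro k
      rw [xtrajP_permParams, gNNp_permParams]
    have hterm2 : α * ∑ i, w i * S (σ i) ≤ α * ∑ i, w i * S i := by
      have hAv : Antivary w (S ∘ σ) := (hw.monotone).antivary
        (fun i j hij => hanti i j hij)
      have h := hAv.sum_smul_le_sum_smul_comp_perm (σ := σ⁻¹)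
      have h2 : ∑ i, w i • (S ∘ σ) i ≤ ∑ i, w i • S i := by
        refine h.trans_eq (Finset.sum_congr rfl fun i _ => ?_)
        simp [Function.comp]
      simp only [smul_eq_mul, Function.comp] at h2
      exact mul_le_mul_of_nonneg_left h2 hα.le
    have hAg1 : (∑ j, ∑ i, ((permParams σ θ).Ag1 j i) ^ 2) =
        ∑ j, ∑ i, (θ.Ag1 j i) ^ 2 := by
      refine Finset.sum_congr rfl fun j _ => ?_
      exact Equiv.sum_comp σ (fun i => (θ.Ag1 j i) ^ 2)
    have e1 : (∑ k ∈ Finset.range N, ∑ j,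
        (y k j - gNNp ψ1 ψ (permParams σ θ)
          (xtrajP φ1 φ φL u (permParams σ θ) k) j) ^ 2) =
        ∑ k ∈ Finset.range N, ∑ j,
          (y k j - gNNp ψ1 ψ θ (xtrajP φ1 φ φL u θ k) j) ^ 2 :=
      Finset.sum_congr rfl fun k _ => by rw [hy]
    have e2 : (∑ i, w i * (∑ k ∈ Finset.range N,
        (xtrajP φ1 φ φL u (permParams σ θ) k i -
          xbarP φ1 φ φL N u (permParams σ θ) i) ^ 2)) =
        ∑ i, w i * S (σ i) :=
      Finset.sum_congr rfl fun i _ => by rw [hS]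
    have e2' : (∑ i, w i * (∑ k ∈ Finset.range N,
        (xtrajP φ1 φ φL u θ k i - xbarP φ1 φ φL N u θ i) ^ 2)) =
        ∑ i, w i * S i := rfl
    simp only [lossP]
    rw [e1, e2, e2', hAg1]
    have ebg1 : (permParams σ θ).bg1 = θ.bg1 := rfl
    have eAg : (permParams σ θ).Ag = θ.Ag := rfl
    have ebg : (permParams σ θ).bg = θ.bg := rfl
    rw [ebg1, eAg, ebg]
    linarith [hterm2]
  · -- variances are decreasingly ordered
    intro i j hij
    have hxbar : ∀ i, xbarP φ1 φ φL N u (permParams σ θ) i =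
        xbarP φ1 φ φL N u θ (σ i) := by
      intro i
      simp only [xbarP, Pi.smul_apply, Finset.sum_apply, smul_eq_mul]
      congr 1
      refine Finset.sum_congr rfl fun k _ => ?_
      rw [xtrajP_permParams]
    have hvar : ∀ a : Fin d, varP φ1 φ φL N u (permParams σ θ) a =
        ((N : ℝ) - 1)⁻¹ * S (σ a) := by
      intro a
      simp only [varP]
      congr 1
      rw [hSdef]
      refine Finset.sum_congr rfl fun k _ => ?_
      rw [xtrajP_permParams, hxbar]
    rw [hvar, hvar]
    have hNpos : (0 : ℝ) ≤ ((N : ℝ) - 1)⁻¹ := by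
      have h2 : (2 : ℝ) ≤ (N : ℝ) := by exact_mod_cast hN
      have : (0 : ℝ) ≤ (N : ℝ) - 1 := by linarith
      exact inv_nonneg.mpr this
    exact mul_le_mul_of_nonneg_left (hanti i j hij) hNpos
  · -- predictions unchanged
    intro k _
    rw [xtrajP_permParams, gNNp_permParams]
end

section
/- Let f_NN be a layered state network with L ≥ 2 layers (dimensions l_0 = d + m, …, l_L = d, weights A_i, biases b_i, activations φ_{i,j}) and g_NN a layered output network with H ≥ 1 layers (dimensions h_0 = d, …, h_H = p, weights A^g_i, biases b^g_i, activations ψ_{i,j}). Fix 1 ≤ s ≤ d and a constant vector c ∈ ℝ^{d−s}. Partition each state x ∈ ℝ^d as x = (x_s, x_r) with x_s ∈ ℝ^s its first s coordinates and x_r ∈ ℝ^{d−s} its last d−s coordinates; partition the first-layer weight matrix columnwise as A_1 = [A_{1s} A_{1r} A_{1u}] (acting on x_s, x_r, u respectively), the last-layer weights rowwise as A_L = [A_{Ls}; A_{Lr}] and b_L = (b_{Ls}, b_{Lr}), and the output-network first-layer weights columnwise as A^g_1 = [A^g_{1s} A^g_{1r}]. Define the reduced state network f_s of order s: first layer z,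 u ↦ (j ↦ φ_{1,j}((A_{1s} z + A_{1u} u + (b_1 + A_{1r} c))(j))), middle layers f_2, …, f_{L−1} unchanged, last layer w ↦ (j ↦ φ_{L,j}((A_{Ls} w + b_{Ls})(j)) for j ≤ s); and the reduced output network g_s: first layer z ↦ (j ↦ ψ_{1,j}((A^g_{1s} z + (b^g_1 + A^g_{1r} c))(j))), remaining layers unchanged. Let u_0, …, u_{K−1} ∈ ℝ^m and let x_0, …, x_K be a trajectory with x_{k+1} = f_NN(x_k, u_k), and suppose the residual coordinates are constant: x_{r,k} = c for all 0 ≤ k ≤ K. Then the significant coordinates z_k := x_{s,k} satisfy the reduced recursion z_{k+1} = f_s(z_k, u_k) for all 0 ≤ k ≤ K−1, and the reduced outputs coincide with the full outputs: g_s(z_k) = g_NN(x_k) for all 0 ≤ k ≤ K. -/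
/-- exact model-order reduction step for R-SSNNO.
The state dimension is `d = s + r` with `s` significant and `r = d − s` residual
coordinates; states are partitioned as `x = (x_s, x_r)` with
`x_s i = x (castAdd r i)` and `x_r i = x (natAdd s i)`.  The state network `f_NN`
has `L = Mid + 2` layers (explicit first and last layers, `Mid` middle layers) and
the output network `g_NN` has `H = Hg + 1` layers (explicit first layer, `Hg`
further layers).  The reduced networks `f_s` and `g_s` of order `s` are obtained
from the columnwise partitions `A1 = [A1s A1r A1u]`, `Ag1 = [Ag1s Ag1r]`, the
rowwise partitions `ALs, bLs` of the last state layer, fixing the residual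
coordinates at the constant vector `c` and absorbing `A1r c` and `Ag1r c` into the
first-layer biases.  If along a trajectory `x_{k+1} = f_NN(x_k, u_k)`
(for `k < K`) the residual coordinates are constant, `x_{r,k} = c` for `k ≤ K`,
then the significant coordinates `z_k = x_{s,k}` satisfy the reduced recursion
`z_{k+1} = f_s(z_k, u_k)` for `k < K`, and the reduced outputs coincide with the
full outputs, `g_s(z_k) = g_NN(x_k)` for `k ≤ K`. -/
theorem rssnno_exact_reduction
    (s r m : ℕ) (hs : 1 ≤ s)
    (Mid : ℕ) (lh : ℕ → ℕ)
    (A1 : Matrix (Fin (lh 0)) (Fin (s + r + m)) ℝ) (b1 : Fin (lh 0) → ℝ)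
    (φ1 : Fin (lh 0) → ℝ → ℝ)
    (A : ∀ i, Matrix (Fin (lh (i + 1))) (Fin (lh i)) ℝ)
    (b : ∀ i, Fin (lh (i + 1)) → ℝ)
    (φ : ∀ i, Fin (lh (i + 1)) → ℝ → ℝ)
    (AL : Matrix (Fin (s + r)) (Fin (lh Mid)) ℝ) (bL : Fin (s + r) → ℝ)
    (φL : Fin (s + r) → ℝ → ℝ)
    (Hg : ℕ) (gh : ℕ → ℕ)
    (Ag1 : Matrix (Fin (gh 0)) (Fin (s + r)) ℝ) (bg1 : Fin (gh 0) → ℝ)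
    (ψ1 : Fin (gh 0) → ℝ → ℝ)
    (Ag : ∀ i, Matrix (Fin (gh (i + 1))) (Fin (gh i)) ℝ)
    (bg : ∀ i, Fin (gh (i + 1)) → ℝ)
    (ψ : ∀ i, Fin (gh (i + 1)) → ℝ → ℝ)
    (fNN : (Fin (s + r) → ℝ) → (Fin m → ℝ) → Fin (s + r) → ℝ)
    (hfNN : ∀ x u, fNN x u =
      layerMap AL bL φL (netFwd lh A b φ Mid (layerMap A1 b1 φ1 (Fin.append x u))))
    (gNN : (Fin (s + r) → ℝ) → Fin (gh Hg) → ℝ)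
    (hgNN : ∀ x, gNN x = netFwd gh Ag bg ψ Hg (layerMap Ag1 bg1 ψ1 x))
    (c : Fin r → ℝ)
    (A1s : Matrix (Fin (lh 0)) (Fin s) ℝ)
    (hA1s : ∀ j i, A1s j i = A1 j (Fin.castAdd m (Fin.castAdd r i)))
    (A1r : Matrix (Fin (lh 0)) (Fin r) ℝ)
    (hA1r : ∀ j i, A1r j i = A1 j (Fin.castAdd m (Fin.natAdd s i)))
    (A1u : Matrix (Fin (lh 0)) (Fin m) ℝ)
    (hA1u : ∀ j i, A1u j i = A1 j (Fin.natAdd (s + r) i))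
    (ALs : Matrix (Fin s) (Fin (lh Mid)) ℝ)
    (hALs : ∀ j i, ALs j i = AL (Fin.castAdd r j) i)
    (bLs : Fin s → ℝ) (hbLs : ∀ j, bLs j = bL (Fin.castAdd r j))
    (Ag1s : Matrix (Fin (gh 0)) (Fin s) ℝ)
    (hAg1s : ∀ j i, Ag1s j i = Ag1 j (Fin.castAdd r i))
    (Ag1r : Matrix (Fin (gh 0)) (Fin r) ℝ)
    (hAg1r : ∀ j i, Ag1r j i = Ag1 j (Fin.natAdd s i))
    (fs : (Fin s → ℝ) → (Fin m → ℝ) → Fin s → ℝ)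
    (hfs : ∀ z uu, fs z uu = fun j => φL (Fin.castAdd r j)
      ((ALs.mulVec (netFwd lh A b φ Mid
        (fun j1 => φ1 j1 ((A1s.mulVec z + A1u.mulVec uu + (b1 + A1r.mulVec c)) j1)))
        + bLs) j))
    (gs : (Fin s → ℝ) → Fin (gh Hg) → ℝ)
    (hgs : ∀ z, gs z = netFwd gh Ag bg ψ Hg
      (fun j => ψ1 j ((Ag1s.mulVec z + (bg1 + Ag1r.mulVec c)) j)))
    (K : ℕ) (u : ℕ → Fin m → ℝ) (x : ℕ → Fin (s + r) → ℝ)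
    (hx : ∀ k < K, x (k + 1) = fNN (x k) (u k))
    (hres : ∀ k ≤ K, ∀ i : Fin r, x k (Fin.natAdd s i) = c i)
    (z : ℕ → Fin s → ℝ) (hz : ∀ k i, z k i = x k (Fin.castAdd r i)) :
    (∀ k < K, z (k + 1) = fs (z k) (u k)) ∧
    (∀ k ≤ K, gs (z k) = gNN (x k)) := by
  constructor
  · intro k hk
    funext j
    rw [hz, hx k hk, hfNN, hfs]
    have hin : (layerMap A1 b1 φ1 (Fin.append (x k) (u k))) =
        (fun j1 => φ1 j1 ((A1s.mulVec (z k) + A1u.mulVec (u k) + (b1 + A1r.mulVec c)) j1)) := by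
      funext j1
      simp only [layerMap]
      congr 1
      simp only [Pi.add_apply, Matrix.mulVec, dotProduct, Fin.sum_univ_add,
        Fin.append_left, Fin.append_right]
      have h1 : ∑ i : Fin s, A1 j1 (Fin.castAdd m (Fin.castAdd r i)) * x k (Fin.castAdd r i)
          = ∑ i : Fin s, A1s j1 i * z k i :=
        Finset.sum_congr rfl fun i _ => by rw [hA1s, hz]
      have h2 : ∑ i : Fin r, A1 j1 (Fin.castAdd m (Fin.natAdd s i)) * x k (Fin.natAdd s i)
          = ∑ i : Fin r, A1r j1 i * c i :=
        Finset.sum_congr rfl fun i _ => by rw [hA1r, hres k (Nat.le_of_lt hk) i]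
      have h3 : ∑ i : Fin m, A1 j1 (Fin.natAdd (s + r) i) * u k i
          = ∑ i : Fin m, A1u j1 i * u k i :=
        Finset.sum_congr rfl fun i _ => by rw [hA1u]
      rw [h1, h2, h3]
      ring
    rw [hin]
    simp only [layerMap, Pi.add_apply]
    congr 1
    rw [hbLs]
    congr 1
    simp only [Matrix.mulVec, dotProduct]
    exact Finset.sum_congr rfl fun i _ => by rw [hALs]
  · intro k hk
    funext j
    rw [hgs, hgNN]
    congr 1
    funext j1
    simp only [layerMap, Pi.add_apply, Matrix.mulVec, dotProduct, Fin.sum_univ_add]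
    congr 1
    rw [add_assoc]
    congr 1
    · exact Finset.sum_congr rfl fun i _ => by rw [hAg1s, hz]
    · rw [add_comm]
      congr 1
      exact Finset.sum_congr rfl fun i _ => by rw [hAg1r, hres k hk i]
end
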